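/- Let F be a family of functions X → ℝ and φ : ℝ → ℝ an L-Lipschitz function. Then for every sample S, R̂_S(φ ∘ F) ≤ L·R̂_S(F), where φ ∘ F = { φ ∘ f : f ∈ F } (Talagrand's contraction lemma). -/

import Mathlib

open Finset

/-- Empirical Rademacher complexity of a family `F` of real-valued functions on the
sample `S = (x_1, …, x_m)`: the expectation over i.i.d. Rademacher signs
`σ : Fin m → Bool` (Bool encoding ±1) of `sup_{f ∈ F} (1/m) ∑ i σ i * f (S i)`. -/
noncomputable def radComp {X : Type*} (m : ℕ) (S : Fin m → X) (F : Set (X → ℝ)) : ℝ :=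
  (∑ σ : Fin m → Bool,
    sSup ((fun f => (1 / (m : ℝ)) * ∑ i, (if σ i then (1 : ℝ) else -1) * f (S i)) '' F)) / 2 ^ m

namespace Stmt13Aux

/-- the real sign of a boolean sign vector -/
def sg {m : ℕ} (σ : Fin m → Bool) (i : Fin m) : ℝ := if σ i then 1 else -1

lemma abs_sg {m : ℕ} (σ : Fin m → Bool) (i : Fin m) : |sg σ i| = 1 := by
  unfold sg; split <;> norm_num

/-- apply φ on coordinates in K, `L • id` elsewhere -/
def hK (φ : ℝ → ℝ) (L : ℝ) {m : ℕ} (K : Finset (Fin m)) (i : Fin m) (t : ℝ) : ℝ :=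
  if i ∈ K then φ t else L * t

/-- helper: image of a uniformly bounded function is bounded above -/
lemma bdd_img {Y : Type*} {F : Set Y} {v : Y → ℝ} {M : ℝ} (h : ∀ f ∈ F, v f ≤ M) :
    BddAbove (v '' F) := by
  refine ⟨M, ?_⟩
  rintro _ ⟨f, hf, rfl⟩
  exact h f hf

/-- core two-point inequality -/
lemma key {Y : Type*} (φ : ℝ → ℝ) (L : ℝ) (hL : 0 ≤ L)
    (hlip : ∀ s t : ℝ, |φ s - φ t| ≤ L * |s - t|)
    (F : Set Y) (hne : F.Nonempty) (u g : Y → ℝ) (ε : ℝ) (hε : |ε| = 1)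
    (h3 : BddAbove ((fun f => ε * (L * u f) + g f) '' F))
    (h4 : BddAbove ((fun f => -(ε * (L * u f)) + g f) '' F)) :
    sSup ((fun f => ε * φ (u f) + g f) '' F) + sSup ((fun f => -(ε * φ (u f)) + g f) '' F)
      ≤ sSup ((fun f => ε * (L * u f) + g f) '' F)
        + sSup ((fun f => -(ε * (L * u f)) + g f) '' F) := by
  set D := sSup ((fun f => ε * (L * u f) + g f) '' F)
      + sSup ((fun f => -(ε * (L * u f)) + g f) '' F) with hD
  have main : ∀ f ∈ F, ∀ f' ∈ F,
      (ε * φ (u f) + g f) + (-(ε * φ (u f')) + g f') ≤ D := by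
    intro f hf f' hf'
    have hφ : ε * φ (u f) - ε * φ (u f') ≤ L * |u f - u f'| := by
      have he : ε * φ (u f) - ε * φ (u f') = ε * (φ (u f) - φ (u f')) := by ring
      rw [he]
      calc ε * (φ (u f) - φ (u f')) ≤ |ε * (φ (u f) - φ (u f'))| := le_abs_self _
        _ = |φ (u f) - φ (u f')| := by rw [abs_mul, hε, one_mul]
        _ ≤ L * |u f - u f'| := hlip _ _
    have habs : |u f - u f'| = |ε * (u f - u f')| := by rw [abs_mul, hε, one_mul]
    by_cases hc : 0 ≤ ε * (u f - u f')
    · have hq : L * |u f - u f'| = ε * (L * u f) - ε * (L * u f') := by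
        rw [habs, abs_of_nonneg hc]; ring
      have hA : ε * (L * u f) + g f ≤ sSup ((fun f => ε * (L * u f) + g f) '' F) :=
        le_csSup h3 ⟨f, hf, rfl⟩
      have hB : -(ε * (L * u f')) + g f' ≤ sSup ((fun f => -(ε * (L * u f)) + g f) '' F) :=
        le_csSup h4 ⟨f', hf', rfl⟩
      linarith
    · push_neg at hc
      have hq : L * |u f - u f'| = ε * (L * u f') - ε * (L * u f) := by
        rw [habs, abs_of_nonpos hc.le]; ring
      have hA : ε * (L * u f') + g f' ≤ sSup ((fun f => ε * (L * u f) + g f) '' F) :=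
        le_csSup h3 ⟨f', hf', rfl⟩
      have hB : -(ε * (L * u f)) + g f ≤ sSup ((fun f => -(ε * (L * u f)) + g f) '' F) :=
        le_csSup h4 ⟨f, hf, rfl⟩
      linarith
  have step1 : sSup ((fun f => ε * φ (u f) + g f) '' F)
      ≤ D - sSup ((fun f => -(ε * φ (u f)) + g f) '' F) := by
    apply csSup_le (hne.image _)
    rintro _ ⟨f, hf, rfl⟩
    dsimp only
    have : sSup ((fun f => -(ε * φ (u f)) + g f) '' F) ≤ D - (ε * φ (u f) + g f) := by
      apply csSup_le (hne.image _)
      rintro _ ⟨f', hf', rfl⟩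
      dsimp only
      have := main f hf f' hf'
      linarith
    linarith
  linarith

section Main

variable {X : Type*} (φ : ℝ → ℝ) (L : ℝ) {m : ℕ} (S : Fin m → X) (F : Set (X → ℝ))

/-- intermediate quantity -/
noncomputable def Aval (K : Finset (Fin m)) (σ : Fin m → Bool) : ℝ :=
  sSup ((fun f => ∑ i, sg σ i * hK φ L K i (f (S i))) '' F)

end Main

variable {X : Type*} {φ : ℝ → ℝ} {L : ℝ} {m : ℕ} {S : Fin m → X} {F : Set (X → ℝ)}
variable (hL : 0 ≤ L) (hlip : ∀ s t : ℝ, |φ s - φ t| ≤ L * |s - t|)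
variable {C : ℝ} (hC : ∀ f ∈ F, ∀ x, |f x| ≤ C)

include hL hlip hC in
lemma bound_pt (K : Finset (Fin m)) (σ : Fin m → Bool) :
    ∀ f ∈ F, ∑ i, sg σ i * hK φ L K i (f (S i)) ≤ m * (|φ 0| + L * max C 0) := by
  intro f hf
  have hterm : ∀ i : Fin m, sg σ i * hK φ L K i (f (S i)) ≤ |φ 0| + L * max C 0 := by
    intro i
    have ht : |f (S i)| ≤ max C 0 := le_trans (hC f hf (S i)) (le_max_left _ _)
    have hh : |hK φ L K i (f (S i))| ≤ |φ 0| + L * max C 0 := by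
      unfold hK
      split
      · have h1 : |φ (f (S i))| ≤ |φ (f (S i)) - φ 0| + |φ 0| := by
          have := abs_add_le (φ (f (S i)) - φ 0) (φ 0)
          simpa using this
        have h2 : |φ (f (S i)) - φ 0| ≤ L * |f (S i) - 0| := hlip _ _
        have h3 : |f (S i) - 0| ≤ max C 0 := by rwa [sub_zero]
        have h4 : L * |f (S i) - 0| ≤ L * max C 0 := mul_le_mul_of_nonneg_left h3 hL
        linarith
      · have h1 : |L * f (S i)| = L * |f (S i)| := by rw [abs_mul, abs_of_nonneg hL]
        have h2 : L * |f (S i)| ≤ L * max C 0 := mul_le_mul_of_nonneg_left ht hL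
        have h3 := abs_nonneg (φ 0)
        linarith
    calc sg σ i * hK φ L K i (f (S i)) ≤ |sg σ i * hK φ L K i (f (S i))| := le_abs_self _
      _ = |hK φ L K i (f (S i))| := by rw [abs_mul, abs_sg, one_mul]
      _ ≤ |φ 0| + L * max C 0 := hh
  calc ∑ i, sg σ i * hK φ L K i (f (S i)) ≤ ∑ _i : Fin m, (|φ 0| + L * max C 0) :=
        Finset.sum_le_sum fun i _ => hterm i
    _ = m * (|φ 0| + L * max C 0) := by
        rw [Finset.sum_const, Finset.card_univ, Fintype.card_fin, nsmul_eq_mul]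

include hL hlip hC in
lemma bddA (K : Finset (Fin m)) (σ : Fin m → Bool) :
    BddAbove ((fun f => ∑ i, sg σ i * hK φ L K i (f (S i))) '' F) :=
  bdd_img (bound_pt hL hlip hC K σ)

/-- the flip-one-coordinate equiv -/
def eflip {m : ℕ} (j : Fin m) : (Fin m → Bool) ≃ (Fin m → Bool) :=
  Function.Involutive.toPerm (fun σ => Function.update σ j (!σ j)) (by
    intro σ; funext i
    by_cases h : i = j
    · subst h; simp
    · simp [Function.update_of_ne h])

lemma sg_eflip_self {m : ℕ} (j : Fin m) (σ : Fin m → Bool) :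
    sg (eflip j σ) j = -(sg σ j) := by
  simp only [eflip, Function.Involutive.toPerm, Equiv.coe_fn_mk, sg, Function.update_self]
  cases σ j <;> norm_num

lemma sg_eflip_ne {m : ℕ} (j : Fin m) (σ : Fin m → Bool) {i : Fin m} (h : i ≠ j) :
    sg (eflip j σ) i = sg σ i := by
  simp only [eflip, Function.Involutive.toPerm, Equiv.coe_fn_mk, sg, Function.update_of_ne h]

include hL hlip hC in
lemma step (hne : F.Nonempty) (j : Fin m) (K : Finset (Fin m)) (hj : j ∉ K) :
    ∑ σ : Fin m → Bool, Aval φ L S F (insert j K) σ ≤ ∑ σ : Fin m → Bool, Aval φ L S F K σ := by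
  have hsum : ∀ (K' : Finset (Fin m)),
      (2 : ℝ) * ∑ σ : Fin m → Bool, Aval φ L S F K' σ
        = ∑ σ : Fin m → Bool, (Aval φ L S F K' σ + Aval φ L S F K' (eflip j σ)) := by
    intro K'
    rw [Finset.sum_add_distrib, Equiv.sum_comp (eflip j) (Aval φ L S F K')]
    ring
  have h2 : (0:ℝ) < 2 := by norm_num
  rw [← mul_le_mul_iff_right₀ h2, hsum, hsum]
  apply Finset.sum_le_sum
  intro σ _
  set ε := sg σ j with hεdef
  set g : (X → ℝ) → ℝ := fun f => ∑ i ∈ Finset.univ.erase j, sg σ i * hK φ L K i (f (S i))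
    with hgdef
  set u : (X → ℝ) → ℝ := fun f => f (S j) with hudef
  have hrest : ∀ (K' : Finset (Fin m)) (τ : Fin m → Bool),
      (∀ i : Fin m, i ≠ j → sg τ i = sg σ i)
      → (∀ i : Fin m, i ≠ j → hK φ L K' i = hK φ L K i)
      → ∀ f : X → ℝ,
        ∑ i ∈ Finset.univ.erase j, sg τ i * hK φ L K' i (f (S i)) = g f := by
    intro K' τ hτ hK' f
    apply Finset.sum_congr rfl
    intro i hi
    have hij : i ≠ j := Finset.ne_of_mem_erase hi
    rw [hτ i hij, hK' i hij]
  have hins : ∀ i : Fin m, i ≠ j → hK φ L (insert j K) i = hK φ L K i := by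
    intro i hij; funext t; unfold hK; simp [Finset.mem_insert, hij]
  have split : ∀ (K' : Finset (Fin m)) (τ : Fin m → Bool) (f : X → ℝ),
      ∑ i, sg τ i * hK φ L K' i (f (S i))
        = sg τ j * hK φ L K' j (f (S j))
          + ∑ i ∈ Finset.univ.erase j, sg τ i * hK φ L K' i (f (S i)) := by
    intro K' τ f
    exact (Finset.add_sum_erase Finset.univ
      (fun i => sg τ i * hK φ L K' i (f (S i))) (Finset.mem_univ j)).symm
  have e1 : (fun f : X → ℝ => ∑ i, sg σ i * hK φ L (insert j K) i (f (S i)))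
      = fun f => ε * φ (u f) + g f := by
    funext f
    rw [split, hrest (insert j K) σ (fun _ _ => rfl) hins]
    congr 2
    unfold hK; simp [hεdef, hudef]
  have e2 : (fun f : X → ℝ => ∑ i, sg (eflip j σ) i * hK φ L (insert j K) i (f (S i)))
      = fun f => -(ε * φ (u f)) + g f := by
    funext f
    rw [split, hrest (insert j K) (eflip j σ) (fun i hi => sg_eflip_ne j σ hi) hins,
      sg_eflip_self]
    congr 2
    unfold hK; simp [neg_mul, hεdef, hudef]
  have e3 : (fun f : X → ℝ => ∑ i, sg σ i * hK φ L K i (f (S i)))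
      = fun f => ε * (L * u f) + g f := by
    funext f
    rw [split, hrest K σ (fun _ _ => rfl) (fun _ _ => rfl)]
    congr 2
    unfold hK; simp [hj, hεdef, hudef]
  have e4 : (fun f : X → ℝ => ∑ i, sg (eflip j σ) i * hK φ L K i (f (S i)))
      = fun f => -(ε * (L * u f)) + g f := by
    funext f
    rw [split, hrest K (eflip j σ) (fun i hi => sg_eflip_ne j σ hi) (fun _ _ => rfl),
      sg_eflip_self]
    congr 2
    unfold hK; simp [hj, neg_mul, hεdef, hudef]
  have b3 := bddA (S := S) hL hlip hC K σ
  have b4 := bddA (S := S) hL hlip hC K (eflip j σ)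
  rw [e3] at b3; rw [e4] at b4
  unfold Aval
  rw [e1, e2, e3, e4]
  exact key φ L hL hlip F hne u g ε (abs_sg σ j) b3 b4

include hL hlip hC in
lemma descend (hne : F.Nonempty) (K : Finset (Fin m)) :
    ∑ σ : Fin m → Bool, Aval φ L S F K σ ≤ ∑ σ : Fin m → Bool, Aval φ L S F ∅ σ := by
  induction K using Finset.induction_on with
  | empty => exact le_rfl
  | @insert j K hj ih => exact le_trans (step hL hlip hC hne j K hj) ih

open Pointwise in
lemma sSup_const_mul_img {Y : Type*} (c : ℝ) (hc : 0 ≤ c) (F : Set Y) (v : Y → ℝ) :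
    sSup ((fun f => c * v f) '' F) = c * sSup (v '' F) := by
  have h : (fun f => c * v f) '' F = c • (v '' F) := by
    rw [← Set.image_smul, Set.image_image]
    simp [smul_eq_mul]
  rw [h, Real.sSup_smul_of_nonneg hc, smul_eq_mul]

end Stmt13Aux

open Stmt13Aux in
theorem stmt13 {X : Type*} (F : Set (X → ℝ)) (φ : ℝ → ℝ) (L : ℝ) (hL : 0 ≤ L)
    (hlip : ∀ s t : ℝ, |φ s - φ t| ≤ L * |s - t|)
    (hbd : ∃ C : ℝ, ∀ f ∈ F, ∀ x, |f x| ≤ C)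
    (m : ℕ) (S : Fin m → X) :
    radComp m S ((fun f => φ ∘ f) '' F) ≤ L * radComp m S F := by
  rcases F.eq_empty_or_nonempty with rfl | hne
  · simp [radComp, Real.sSup_empty]
  obtain ⟨C, hC⟩ := hbd
  have hm : (0:ℝ) ≤ 1 / (m:ℝ) := by positivity
  have hAuniv : ∀ σ : Fin m → Bool,
      (fun f : X → ℝ => ∑ i, sg σ i * hK φ L Finset.univ i (f (S i)))
        = fun f => ∑ i, (if σ i then (1:ℝ) else -1) * φ (f (S i)) := by
    intro σ; funext f; simp [sg, hK]
  have hA0 : ∀ σ : Fin m → Bool,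
      (fun f : X → ℝ => ∑ i, sg σ i * hK φ L (∅ : Finset (Fin m)) i (f (S i)))
        = fun f => L * ∑ i, (if σ i then (1:ℝ) else -1) * f (S i) := by
    intro σ; funext f
    rw [Finset.mul_sum]
    apply Finset.sum_congr rfl
    intro i _
    simp only [sg, hK, Finset.notMem_empty, if_false]
    ring
  have hLHS : radComp m S ((fun f => φ ∘ f) '' F)
      = (∑ σ : Fin m → Bool, (1 / (m:ℝ)) * Aval φ L S F Finset.univ σ) / 2 ^ m := by
    unfold radComp
    congr 1
    apply Finset.sum_congr rfl
    intro σ _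
    rw [Set.image_image]
    simp only [Function.comp_apply]
    rw [sSup_const_mul_img (1 / (m:ℝ)) hm F
      (fun f => ∑ i, (if σ i then (1:ℝ) else -1) * φ (f (S i)))]
    unfold Aval
    rw [hAuniv σ]
  have hRHS : L * radComp m S F
      = (∑ σ : Fin m → Bool, (1 / (m:ℝ)) * Aval φ L S F (∅ : Finset (Fin m)) σ) / 2 ^ m := by
    unfold radComp
    rw [← mul_div_assoc, Finset.mul_sum]
    congr 1
    apply Finset.sum_congr rfl
    intro σ _
    rw [sSup_const_mul_img (1 / (m:ℝ)) hm F
      (fun f => ∑ i, (if σ i then (1:ℝ) else -1) * f (S i))]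
    unfold Aval
    rw [hA0 σ, sSup_const_mul_img L hL F
      (fun f => ∑ i, (if σ i then (1:ℝ) else -1) * f (S i))]
    ring
  rw [hLHS, hRHS]
  have hd := descend (S := S) hL hlip hC hne Finset.univ
  rw [← Finset.mul_sum, ← Finset.mul_sum]
  gcongr
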